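/- arXiv:2104.06867 — 6 statements merged into one kernel-verified Lean document; each statement's English description precedes it below -/
import Mathlib

section
/- Let A be an n×n nonnegative matrix and let A_l denote its strictly lower triangular part. Define A' = A_l^{J-1} + A_l^{J-2} + ... + A_l for some integer J ≥ 2, and let Ã = A + A'(A - I). If A is irreducible with spectral radius r = ρ(A) > 1, then ρ(Ã) ≥ ρ(A). -/
open Matrix

noncomputable def specRad {m : Type*} [Fintype m] [DecidableEq m]
    (M : Matrix m m ℝ) : ℝ :=
  sSup ((fun μ : ℂ => ‖μ‖) '' spectrum ℂ (M.map (algebraMap ℝ ℂ)))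

def MatReducible {n : ℕ} (M : Matrix (Fin n) (Fin n) ℝ) : Prop :=
  ∃ (σ : Equiv.Perm (Fin n)) (k : ℕ), 0 < k ∧ k < n ∧
    ∀ i j : Fin n, k ≤ (i : ℕ) → (j : ℕ) < k → M (σ i) (σ j) = 0

open Filter Topology
attribute [local instance] Matrix.linftyOpNormedRing Matrix.linftyOpNormedAlgebra

-- entrywise nonneg helpers
lemma aux_mul_nonneg {n : ℕ} {P Q : Matrix (Fin n) (Fin n) ℝ}
    (hP : ∀ i j, 0 ≤ P i j) (hQ : ∀ i j, 0 ≤ Q i j) : ∀ i j, 0 ≤ (P * Q) i j := by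
  intro i j
  rw [Matrix.mul_apply]
  exact Finset.sum_nonneg fun k _ => mul_nonneg (hP i k) (hQ k j)

lemma aux_pow_nonneg {n : ℕ} {P : Matrix (Fin n) (Fin n) ℝ}
    (hP : ∀ i j, 0 ≤ P i j) : ∀ k, ∀ i j, 0 ≤ (P ^ k) i j := by
  intro k
  induction k with
  | zero => intro i j; rw [pow_zero, Matrix.one_apply]; positivity
  | succ k ih => intro i j; rw [pow_succ]; exact aux_mul_nonneg ih hP i j

lemma aux_mulVec_nonneg {n : ℕ} {P : Matrix (Fin n) (Fin n) ℝ}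
    (hP : ∀ i j, 0 ≤ P i j) {v : Fin n → ℝ} (hv : ∀ i, 0 ≤ v i) :
    ∀ i, 0 ≤ (P *ᵥ v) i := by
  intro i
  rw [Matrix.mulVec, dotProduct]
  exact Finset.sum_nonneg fun j _ => mul_nonneg (hP i j) (hv j)

-- geometric identity
lemma aux_geom {n : ℕ} (N : Matrix (Fin n) (Fin n) ℝ) :
    ∀ J, 1 ≤ J → (∑ k ∈ Finset.Ico 1 J, N ^ k) * N
      = (∑ k ∈ Finset.Ico 1 J, N ^ k) - N + N ^ J := by
  intro J hJ
  induction J, hJ using Nat.le_induction with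
  | base => simp
  | succ J hJ ih =>
    rw [Finset.sum_Ico_succ_top hJ] at *
    rw [add_mul, ih, pow_succ]
    abel

lemma aux_subeigen_pow {n : ℕ} {M : Matrix (Fin n) (Fin n) ℝ}
    (hM : ∀ i j, 0 ≤ M i j) {x : Fin n → ℝ} (hx : ∀ i, 0 ≤ x i)
    {r : ℝ} (hr0 : 0 ≤ r) (hsub : ∀ i, r * x i ≤ (M *ᵥ x) i) :
    ∀ k i, r ^ k * x i ≤ ((M ^ k) *ᵥ x) i := by
  intro k
  induction k with
  | zero => intro i; simp [Matrix.one_mulVec]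
  | succ k ih =>
    intro i
    have h1 : ((M ^ (k+1)) *ᵥ x) i = (M *ᵥ ((M ^ k) *ᵥ x)) i := by
      rw [Matrix.mulVec_mulVec, ← pow_succ']
    rw [h1, Matrix.mulVec, dotProduct]
    have h2 : ∑ j, M i j * (r ^ k * x j) ≤ ∑ j, M i j * ((M ^ k) *ᵥ x) j :=
      Finset.sum_le_sum fun j _ => mul_le_mul_of_nonneg_left (ih j) (hM i j)
    refine le_trans ?_ h2
    have h3 : ∑ j, M i j * (r ^ k * x j) = r ^ k * (M *ᵥ x) i := by
      rw [Matrix.mulVec, dotProduct, Finset.mul_sum]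
      exact Finset.sum_congr rfl fun j _ => by ring
    rw [h3]
    calc r ^ (k+1) * x i = r ^ k * (r * x i) := by ring
      _ ≤ r ^ k * (M *ᵥ x) i := mul_le_mul_of_nonneg_left (hsub i) (pow_nonneg hr0 k)

lemma aux_le_specRad {n : ℕ} (M : Matrix (Fin n) (Fin n) ℝ)
    (hM : ∀ i j, 0 ≤ M i j) (x : Fin n → ℝ) (hx : ∀ i, 0 ≤ x i)
    (i0 : Fin n) (hx0 : 0 < x i0) {r : ℝ} (hr : 0 < r)
    (hsub : ∀ i, r * x i ≤ (M *ᵥ x) i) : r ≤ specRad M := by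
  classical
  haveI : CompleteSpace (Matrix (Fin n) (Fin n) ℂ) := FiniteDimensional.complete ℂ _
  by_contra hlt
  push_neg at hlt
  set ρ := specRad M with hρ
  set s : ℝ := max ((ρ + r)/2) (r/2) with hs
  have hs0 : 0 < s := lt_of_lt_of_le (by linarith) (le_max_right _ _)
  have hsr : s < r := max_lt (by linarith) (by linarith)
  have hρs : ρ < s := lt_of_lt_of_le (by linarith) (le_max_left _ _)
  set C : Matrix (Fin n) (Fin n) ℂ := M.map (algebraMap ℝ ℂ) with hC
  -- spectralRadius bound
  have hbdd : BddAbove ((fun μ : ℂ => ‖μ‖) '' spectrum ℂ C) :=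
    ((spectrum.isCompact C).image continuous_norm).bddAbove
  have hspec : spectralRadius ℂ C ≤ ENNReal.ofReal ρ := by
    rw [spectralRadius]
    refine iSup₂_le fun μ hμ => ?_
    have : ‖μ‖ ≤ ρ := le_csSup hbdd ⟨μ, hμ, rfl⟩
    rw [← ENNReal.ofReal_coe_nnreal]
    exact ENNReal.ofReal_le_ofReal this
  have hgel := spectrum.pow_nnnorm_pow_one_div_tendsto_nhds_spectralRadius C
  have hev : ∀ᶠ k : ℕ in atTop, (‖C ^ k‖₊ : ENNReal) ^ (1/(k:ℝ)) < ENNReal.ofReal s := by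
    refine hgel.eventually_lt_const ?_
    exact lt_of_le_of_lt hspec (ENNReal.ofReal_lt_ofReal_iff hs0 |>.mpr hρs)
  -- X bound
  set X : ℝ := ∑ j, x j with hX
  have hXpos : 0 < X := by
    refine lt_of_lt_of_le hx0 ?_
    exact Finset.single_le_sum (fun j _ => hx j) (Finset.mem_univ i0)
  have hrs : 1 < r / s := (one_lt_div hs0).mpr hsr
  have hgrow := (tendsto_pow_atTop_atTop_of_one_lt hrs).eventually_gt_atTop (X / x i0)
  obtain ⟨k, ⟨hk1, hk2⟩, hk3⟩ := ((hev.and hgrow).and (eventually_ge_atTop 1)).exists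
  -- from hk1 : norm bound
  have hkpos : (0:ℝ) < k := by exact_mod_cast hk3
  have hnorm : ‖C ^ k‖ < s ^ k := by
    have h1 : (‖C ^ k‖₊ : ENNReal) < (ENNReal.ofReal s) ^ (k:ℝ) := by
      have := ENNReal.rpow_lt_rpow hk1 hkpos
      rwa [← ENNReal.rpow_mul, one_div, inv_mul_cancel₀ (ne_of_gt hkpos),
        ENNReal.rpow_one] at this
    have h2 : (ENNReal.ofReal s) ^ (k:ℝ) = ENNReal.ofReal (s ^ k) := by
      rw [ENNReal.ofReal_rpow_of_pos hs0, Real.rpow_natCast]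
    rw [h2] at h1
    have h3 := (ENNReal.lt_ofReal_iff_toReal_lt ENNReal.coe_ne_top).mp h1
    simpa using h3
  -- combine
  have hpow := aux_subeigen_pow hM hx hr.le hsub k i0
  have hCk : C ^ k = (M ^ k).map (algebraMap ℝ ℂ) := by
    rw [hC, ← RingHom.mapMatrix_apply, ← RingHom.mapMatrix_apply, map_pow]
  have hentry : ∀ j, (M ^ k) i0 j ≤ ‖C ^ k‖ := by
    intro j
    have h4 : ‖(C ^ k) i0 j‖₊ ≤ ‖C ^ k‖₊ := by
      rw [Matrix.linfty_opNNNorm_def]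
      calc ‖(C ^ k) i0 j‖₊ ≤ ∑ j', ‖(C ^ k) i0 j'‖₊ :=
            Finset.single_le_sum (f := fun j' => ‖(C ^ k) i0 j'‖₊)
              (fun j' _ => zero_le) (Finset.mem_univ j)
        _ ≤ _ := Finset.le_sup (f := fun i => ∑ j', ‖(C ^ k) i j'‖₊) (Finset.mem_univ i0)
    have h5 : ‖(C ^ k) i0 j‖ = (M ^ k) i0 j := by
      rw [hCk]
      simp only [Matrix.map_apply, Complex.coe_algebraMap,
        Complex.norm_real, Real.norm_eq_abs]
      exact abs_of_nonneg (aux_pow_nonneg hM k i0 j)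
    calc (M ^ k) i0 j = ‖(C ^ k) i0 j‖ := h5.symm
      _ ≤ ‖C ^ k‖ := h4
  have hbound : ((M ^ k) *ᵥ x) i0 ≤ ‖C ^ k‖ * X := by
    rw [Matrix.mulVec, dotProduct, hX, Finset.mul_sum]
    exact Finset.sum_le_sum fun j _ =>
      mul_le_mul_of_nonneg_right (hentry j) (hx j)
  have hfin : r ^ k * x i0 ≤ s ^ k * X :=
    le_trans hpow (le_trans hbound
      (mul_le_mul_of_nonneg_right hnorm.le hXpos.le))
  -- contradiction with hk2
  have hs' : (0:ℝ) < s ^ k := pow_pos hs0 k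
  rw [div_pow, div_lt_div_iff₀ hx0 hs'] at hk2
  have hcon := hk2.trans_le hfin
  rw [mul_comm (s ^ k) X] at hcon
  exact lt_irrefl _ hcon

lemma aux_exists_subeigen {n : ℕ} (hn : 0 < n) (M : Matrix (Fin n) (Fin n) ℝ)
    (hM : ∀ i j, 0 ≤ M i j) :
    ∃ x : Fin n → ℝ, (∀ i, 0 ≤ x i) ∧ (∃ i0, 0 < x i0) ∧
      ∀ i, specRad M * x i ≤ (M *ᵥ x) i := by
  classical
  haveI : CompleteSpace (Matrix (Fin n) (Fin n) ℂ) := FiniteDimensional.complete ℂ _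
  haveI : Nonempty (Fin n) := ⟨⟨0, hn⟩⟩
  set C : Matrix (Fin n) (Fin n) ℂ := M.map (algebraMap ℝ ℂ) with hC
  haveI : Nontrivial (Matrix (Fin n) (Fin n) ℂ) := by
    refine nontrivial_of_ne 0 1 fun h => ?_
    have := congrArg (fun P : Matrix (Fin n) (Fin n) ℂ => P ⟨0, hn⟩ ⟨0, hn⟩) h
    simp [Matrix.one_apply] at this
  have hne : (spectrum ℂ C).Nonempty := spectrum.nonempty C
  have hcpt : IsCompact ((fun μ : ℂ => ‖μ‖) '' spectrum ℂ C) :=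
    (spectrum.isCompact C).image continuous_norm
  have hmem : specRad M ∈ (fun μ : ℂ => ‖μ‖) '' spectrum ℂ C :=
    hcpt.sSup_mem (hne.image _)
  obtain ⟨lam, hlam, habs⟩ := hmem
  simp only [] at habs
  -- eigenvector
  rw [spectrum.mem_iff] at hlam
  rw [Matrix.isUnit_iff_isUnit_det, isUnit_iff_ne_zero, not_not] at hlam
  obtain ⟨v, hv0, hveq⟩ := (Matrix.exists_mulVec_eq_zero_iff).mpr hlam
  have heig : C *ᵥ v = lam • v := by
    have h1 : (algebraMap ℂ (Matrix (Fin n) (Fin n) ℂ)) lam = lam • (1 : Matrix (Fin n) (Fin n) ℂ) :=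
      Algebra.algebraMap_eq_smul_one lam
    rw [h1, Matrix.sub_mulVec, Matrix.smul_mulVec, Matrix.one_mulVec, sub_eq_zero] at hveq
    exact hveq.symm
  refine ⟨fun i => ‖v i‖, fun i => (norm_nonneg _), ?_, ?_⟩
  · obtain ⟨i0, hi0⟩ := Function.ne_iff.mp hv0
    exact ⟨i0, norm_pos_iff.mpr hi0⟩
  · intro i
    have h2 : (C *ᵥ v) i = lam * v i := by rw [heig]; simp
    have h3 : ‖(C *ᵥ v) i‖ = specRad M * ‖v i‖ := by
      rw [h2, norm_mul, habs]
    rw [← h3]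
    rw [Matrix.mulVec, dotProduct]
    calc ‖∑ j, C i j * v j‖ ≤ ∑ j, ‖C i j * v j‖ :=
          norm_sum_le _ _
      _ = ∑ j, M i j * ‖v j‖ := by
          refine Finset.sum_congr rfl fun j _ => ?_
          rw [norm_mul]
          congr 1
          simp only [hC, Matrix.map_apply, Complex.coe_algebraMap, Complex.norm_real,
            Real.norm_eq_abs]
          exact abs_of_nonneg (hM i j)
      _ = (M *ᵥ fun j => ‖v j‖) i := by
          rw [Matrix.mulVec, dotProduct]

theorem stmt1 {n : ℕ} (A : Matrix (Fin n) (Fin n) ℝ)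
    (hA : ∀ i j, 0 ≤ A i j)
    (J : ℕ) (hJ : 2 ≤ J)
    (Al : Matrix (Fin n) (Fin n) ℝ)
    (hAl : ∀ i j, Al i j = if (j : ℕ) < (i : ℕ) then A i j else 0)
    (A' : Matrix (Fin n) (Fin n) ℝ)
    (hA' : A' = ∑ k ∈ Finset.Icc 1 (J - 1), Al ^ k)
    (hirr : ¬ MatReducible A)
    (hr : 1 < specRad A) :
    specRad A ≤ specRad (A + A' * (A - 1)) := by
  classical
  rcases Nat.eq_zero_or_pos n with rfl | hn
  · exfalso
    have hemp : spectrum ℂ (A.map (algebraMap ℝ ℂ)) = ∅ := by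
      rw [Set.eq_empty_iff_forall_notMem]
      intro μ hμ
      rw [spectrum.mem_iff] at hμ
      exact hμ (isUnit_of_subsingleton _)
    have : specRad A = 0 := by rw [specRad, hemp, Set.image_empty, Real.sSup_empty]
    linarith [hr.trans_eq this]
  -- entrywise facts
  have hAlnn : ∀ i j, 0 ≤ Al i j := by
    intro i j; rw [hAl]; split <;> [exact hA i j; exact le_refl 0]
  have hAlA : ∀ i j, 0 ≤ (A - Al) i j := by
    intro i j
    rw [Matrix.sub_apply, hAl, sub_nonneg]
    split <;> [exact le_refl _; exact hA i j]
  have hA'nn : ∀ i j, 0 ≤ A' i j := by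
    intro i j
    rw [hA', Matrix.sum_apply]
    exact Finset.sum_nonneg fun k _ => aux_pow_nonneg hAlnn k i j
  -- geometric identity
  have hIcc : Finset.Icc 1 (J - 1) = Finset.Ico 1 J := by
    rw [← Finset.Ico_add_one_right_eq_Icc]
    congr 1
    omega
  have hGeo : A' * Al = A' - Al + Al ^ J := by
    rw [hA', hIcc]
    exact aux_geom Al J (by omega)
  have hTld : A + A' * (A - 1) = (A - Al) + A' * (A - Al) + Al ^ J := by
    rw [mul_sub, mul_one, mul_sub, hGeo]
    abel
  have hTldnn : ∀ i j, 0 ≤ (A + A' * (A - 1)) i j := by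
    intro i j
    rw [hTld, Matrix.add_apply, Matrix.add_apply]
    have h1 := aux_mul_nonneg hA'nn hAlA i j
    have h2 := aux_pow_nonneg hAlnn J i j
    have h3 := hAlA i j
    linarith
  -- sub-eigenvector of A
  obtain ⟨x, hx, ⟨i0, hx0⟩, hsub⟩ := aux_exists_subeigen hn A hA
  set r := specRad A with hrdef
  have hr0 : 0 < r := lt_trans one_pos hr
  -- sub-eigenvector property for the perturbed matrix
  have hsub2 : ∀ i, r * x i ≤ ((A + A' * (A - 1)) *ᵥ x) i := by
    intro i
    rw [Matrix.add_mulVec, Pi.add_apply, ← Matrix.mulVec_mulVec, Matrix.sub_mulVec,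
      Matrix.one_mulVec]
    have h1 : ∀ j, 0 ≤ (A *ᵥ x - x) j := by
      intro j
      have := hsub j
      have hxj := hx j
      have : r * x j - x j ≤ (A *ᵥ x) j - x j := by linarith
      have h2 : 0 ≤ (r - 1) * x j := mul_nonneg (by linarith) hxj
      rw [Pi.sub_apply]
      nlinarith
    have h2 : 0 ≤ (A' *ᵥ (A *ᵥ x - x)) i := aux_mulVec_nonneg hA'nn h1 i
    have := hsub i
    linarith
  exact aux_le_specRad _ hTldnn x hx i0 hx0 hr0 hsub2
end

section
/- Let A = A_l + A_u be an n×n matrix decomposed into its lower-triangular part A_l (including possibly the diagonal, here diagonal is zero) and strictly upper-triangular part A_u, written in a 3×3 block form with zero diagonal blocks: A has blocks A_{1,2}, A_{1,3}, A_{2,1}, A_{2,3}, A_{3,1}, A_{3,2}. Define the layered matrices 𝒜_1, 𝒜_2, 𝒜_3 where 𝒜_j equals the identity in all diagonal blocks except that its j-th block row equals the j-th block row of A with zero diagonal block. Let Ã = 𝒜_3 𝒜_2 𝒜_1. If μ is an eigenvalue of Ã with right eigenvector u, then (μ A_l + A_u) u = μ u. -/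
open Matrix

theorem stmt8 {n : ℕ} (A : Matrix (Fin n) (Fin n) ℝ) (L : Fin n → Fin 3)
    (hdiag : ∀ i j, L i = L j → A i j = 0)
    (Al Au : Matrix (Fin n) (Fin n) ℝ)
    (hAl : ∀ i j, Al i j = if L j < L i then A i j else 0)
    (hAu : ∀ i j, Au i j = if L i < L j then A i j else 0)
    (lay : Fin 3 → Matrix (Fin n) (Fin n) ℝ)
    (hlay : ∀ j i k, (lay j) i k = if L i = j then A i k else if i = k then 1 else 0)
    (μ : ℂ) (u : Fin n → ℂ) (hu : u ≠ 0)
    (heig : ((lay 2 * lay 1 * lay 0).map (algebraMap ℝ ℂ)).mulVec u = μ • u) :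
    (μ • (Al.map (algebraMap ℝ ℂ)) + Au.map (algebraMap ℝ ℂ)).mulVec u = μ • u := by
  classical
  have h3 : ∀ x : Fin 3, x = 0 ∨ x = 1 ∨ x = 2 := by decide
  set f := algebraMap ℝ ℂ with hf
  set v : Fin n → ℂ := ((lay 0).map f).mulVec u with hvdef
  set w : Fin n → ℂ := ((lay 1).map f).mulVec v with hwdef
  have heig' : ∀ k, ((lay 2).map f).mulVec w k = μ * u k := by
    have h : ((lay 2).map f).mulVec w = μ • u := by
      rw [hwdef, hvdef, mulVec_mulVec, mulVec_mulVec, ← Matrix.map_mul, ← Matrix.map_mul]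
      exact heig
    intro k; rw [h]; rfl
  have hvne : ∀ k, L k ≠ 0 → v k = u k := by
    intro k hk
    simp [hvdef, mulVec, dotProduct, Matrix.map_apply, hlay, hk, apply_ite f,
      ite_mul, Finset.sum_ite_eq]
  have hv0 : ∀ k, L k = 0 → v k = ∑ j, f (A k j) * u j := by
    intro k hk
    simp [hvdef, mulVec, dotProduct, Matrix.map_apply, hlay, hk]
  have hwne : ∀ k, L k ≠ 1 → w k = v k := by
    intro k hk
    simp [hwdef, mulVec, dotProduct, Matrix.map_apply, hlay, hk, apply_ite f,
      ite_mul, Finset.sum_ite_eq]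
  have hw1 : ∀ k, L k = 1 → w k = ∑ j, f (A k j) * v j := by
    intro k hk
    simp [hwdef, mulVec, dotProduct, Matrix.map_apply, hlay, hk]
  have hlow2 : ∀ k, L k ≠ 2 → w k = μ * u k := by
    intro k hk
    have := heig' k
    simpa [mulVec, dotProduct, Matrix.map_apply, hlay, hk, apply_ite f,
      ite_mul, Finset.sum_ite_eq] using this
  have h2 : ∀ k, L k = 2 → ∑ j, f (A k j) * w j = μ * u k := by
    intro k hk
    have := heig' k
    simpa [mulVec, dotProduct, Matrix.map_apply, hlay, hk] using this
  have hA0 : ∀ k, L k = 0 → v k = μ * u k := by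
    intro k hk
    rw [← hlow2 k (by simp [hk]), hwne k (by simp [hk])]
  funext i
  simp only [Matrix.add_mulVec, Matrix.smul_mulVec, Pi.add_apply, Pi.smul_apply,
    smul_eq_mul]
  have hl : (Al.map f).mulVec u i = ∑ j, (if L j < L i then f (A i j) else 0) * u j := by
    simp [mulVec, dotProduct, Matrix.map_apply, hAl, apply_ite f]
  have hr : (Au.map f).mulVec u i = ∑ j, (if L i < L j then f (A i j) else 0) * u j := by
    simp [mulVec, dotProduct, Matrix.map_apply, hAu, apply_ite f]
  rw [hl, hr, Finset.mul_sum, ← Finset.sum_add_distrib]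
  rcases h3 (L i) with hi | hi | hi
  · rw [show μ * u i = v i from (hA0 i hi).symm, hv0 i hi]
    refine Finset.sum_congr rfl fun j _ => ?_
    rcases h3 (L j) with hj | hj | hj
    · have hz : A i j = 0 := hdiag i j (by rw [hi, hj])
      simp [hi, hj, hz]
    · simp [hi, hj]
    · simp [hi, hj]
  · rw [show μ * u i = w i from (hlow2 i (by simp [hi])).symm, hw1 i hi]
    refine Finset.sum_congr rfl fun j _ => ?_
    rcases h3 (L j) with hj | hj | hj
    · rw [hA0 j hj]; simp [hi, hj]; ring
    · have hz : A i j = 0 := hdiag i j (by rw [hi, hj])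
      simp [hi, hj, hz]
    · rw [hvne j (by simp [hj])]; simp [hi, hj]
  · rw [show μ * u i = ∑ j, f (A i j) * w j from (h2 i hi).symm]
    refine Finset.sum_congr rfl fun j _ => ?_
    rcases h3 (L j) with hj | hj | hj
    · rw [hlow2 j (by simp [hj])]; simp [hi, hj]; ring
    · rw [hlow2 j (by simp [hj])]; simp [hi, hj]; ring
    · have hz : A i j = 0 := hdiag i j (by rw [hi, hj])
      simp [hi, hj, hz]
end

section
/- With the setup of the 3-layer construction (A = A_l + A_u with zero diagonal blocks, 𝒜_1, 𝒜_2, 𝒜_3 as defined), let Ã' = 𝒜_1 𝒜_2 𝒜_3 be the product with the layer order reversed. If μ' is an eigenvalue of Ã' with right eigenvector u', then (A_l + μ' A_u) u' = μ' u'. -/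
open Matrix

theorem stmt9 {n : ℕ} (A : Matrix (Fin n) (Fin n) ℝ) (L : Fin n → Fin 3)
    (hdiag : ∀ i j, L i = L j → A i j = 0)
    (Al Au : Matrix (Fin n) (Fin n) ℝ)
    (hAl : ∀ i j, Al i j = if L j < L i then A i j else 0)
    (hAu : ∀ i j, Au i j = if L i < L j then A i j else 0)
    (lay : Fin 3 → Matrix (Fin n) (Fin n) ℝ)
    (hlay : ∀ j i k, (lay j) i k = if L i = j then A i k else if i = k then 1 else 0)
    (μ : ℂ) (u : Fin n → ℂ) (hu : u ≠ 0)
    (heig : ((lay 0 * lay 1 * lay 2).map (algebraMap ℝ ℂ)).mulVec u = μ • u) :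
    (Al.map (algebraMap ℝ ℂ) + μ • (Au.map (algebraMap ℝ ℂ))).mulVec u = μ • u := by
  set f := algebraMap ℝ ℂ with hf
  have hrow : ∀ (j : Fin 3) (x : Fin n → ℂ) (k : Fin n),
      ((lay j).map f).mulVec x k =
        if L k = j then ∑ l, f (A k l) * x l else x k := by
    intro j x k
    simp only [Matrix.mulVec, dotProduct, Matrix.map_apply, hlay]
    by_cases h : L k = j
    · simp [h]
    · simp only [h, if_false]
      rw [Finset.sum_eq_single k]
      · simp
      · intro l _ hl; simp [Ne.symm hl]
      · simp
  set v := ((lay 2).map f).mulVec u with hv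
  set w := ((lay 1).map f).mulVec v with hw
  have hprod : ((lay 0).map f).mulVec w = μ • u := by
    rw [hw, hv, Matrix.mulVec_mulVec, Matrix.mulVec_mulVec, ← Matrix.map_mul,
      ← Matrix.map_mul]
    exact heig
  have trich : ∀ x : Fin 3, x = 0 ∨ x = 1 ∨ x = 2 := by decide
  have hwk : ∀ k, L k ≠ 0 → w k = μ * u k := by
    intro k hk
    have h1 : ((lay 0).map f).mulVec w k = w k := by rw [hrow]; simp [hk]
    have h2 := congrFun hprod k
    simp only [Pi.smul_apply, smul_eq_mul] at h2
    rw [h1] at h2; exact h2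
  have hvk : ∀ k, L k ≠ 2 → v k = u k := by
    intro k hk; rw [hv, hrow]; simp [hk]
  have hv2 : ∀ k, L k = 2 → v k = μ * u k := by
    intro k hk
    have h1 : w k = v k := by
      rw [hw, hrow]; simp [hk, show (2 : Fin 3) ≠ 1 from by decide]
    rw [← h1]
    exact hwk k (by rw [hk]; decide)
  have hwi : ∀ i, L i = 1 → ∑ l, f (A i l) * v l = μ * u i := by
    intro i hi
    have h1 : w i = ∑ l, f (A i l) * v l := by rw [hw, hrow]; simp [hi]
    rw [← h1]
    exact hwk i (by rw [hi]; decide)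
  have hvi : ∀ i, L i = 2 → ∑ l, f (A i l) * u l = μ * u i := by
    intro i hi
    have h1 : v i = ∑ l, f (A i l) * u l := by rw [hv, hrow]; simp [hi]
    rw [← h1]; exact hv2 i hi
  have h0i : ∀ i, L i = 0 → ∑ l, f (A i l) * w l = μ * u i := by
    intro i hi
    have h1 : ((lay 0).map f).mulVec w i = ∑ l, f (A i l) * w l := by
      rw [hrow]; simp [hi]
    have h2 := congrFun hprod i
    simp only [Pi.smul_apply, smul_eq_mul] at h2
    rw [h1] at h2; exact h2
  funext i
  have hL : ((Al.map f + μ • Au.map f).mulVec u) i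
      = ∑ k, (f (Al i k) + μ * f (Au i k)) * u k := by
    simp [Matrix.mulVec, dotProduct, Matrix.add_apply, Matrix.smul_apply,
      Matrix.map_apply, smul_eq_mul]
  rw [hL]
  show _ = μ • u i
  rw [smul_eq_mul]
  rcases trich (L i) with hi | hi | hi
  · -- L i = 0 : row equals μ * (Au u) i
    rw [← h0i i hi]
    apply Finset.sum_congr rfl
    intro k _
    rcases trich (L k) with hk | hk | hk
    · have hA : A i k = 0 := hdiag i k (by rw [hi, hk])
      simp [hAl, hAu, hi, hk, hA]
    · have hwk' := hwk k (by rw [hk]; decide)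
      rw [hAl, hAu, hi, hk, hwk']
      simp [show ¬ (1 : Fin 3) < 0 from by decide, show (0 : Fin 3) < 1 from by decide]
      ring
    · have hwk' := hwk k (by rw [hk]; decide)
      rw [hAl, hAu, hi, hk, hwk']
      simp [show ¬ (2 : Fin 3) < 0 from by decide, show (0 : Fin 3) < 2 from by decide]
      ring
  · -- L i = 1
    rw [← hwi i hi]
    apply Finset.sum_congr rfl
    intro k _
    rcases trich (L k) with hk | hk | hk
    · have hvk' := hvk k (by rw [hk]; decide)
      rw [hAl, hAu, hi, hk, hvk']
      simp [show (0 : Fin 3) < 1 from by decide, show ¬ (1 : Fin 3) < 0 from by decide]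
    · have hA : A i k = 0 := hdiag i k (by rw [hi, hk])
      simp [hAl, hAu, hi, hk, hA]
    · have hv2' := hv2 k hk
      rw [hAl, hAu, hi, hk, hv2']
      simp [show ¬ (2 : Fin 3) < 1 from by decide, show (1 : Fin 3) < 2 from by decide]
      ring
  · -- L i = 2
    rw [← hvi i hi]
    apply Finset.sum_congr rfl
    intro k _
    rcases trich (L k) with hk | hk | hk
    · rw [hAl, hAu, hi, hk]
      simp [show (0 : Fin 3) < 2 from by decide, show ¬ (2 : Fin 3) < 0 from by decide]
    · rw [hAl, hAu, hi, hk]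
      simp [show (1 : Fin 3) < 2 from by decide, show ¬ (2 : Fin 3) < 1 from by decide]
    · have hA : A i k = 0 := hdiag i k (by rw [hi, hk])
      simp [hAl, hAu, hi, hk, hA]
end

section
/- With the setup of the 3-layer construction, the products à = 𝒜_3 𝒜_2 𝒜_1 and Ã' = 𝒜_1 𝒜_2 𝒜_3 have the same eigenvalues, provided there exists an involutive permutation matrix P (P = Pᵀ, P² = I) such that A_l P = P A_uᵀ and A_u P = P A_lᵀ. -/
open Matrix

section Helpers

lemma spec_mem_iff {n : ℕ} (M : Matrix (Fin n) (Fin n) ℂ) (z : ℂ) :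
    z ∈ spectrum ℂ M ↔ (z • (1 : Matrix (Fin n) (Fin n) ℂ) - M).det = 0 := by
  rw [spectrum.mem_iff, Algebra.algebraMap_eq_smul_one, Matrix.isUnit_iff_isUnit_det,
    isUnit_iff_ne_zero, not_not]

lemma det_conj_perm {n : ℕ} (P M : Matrix (Fin n) (Fin n) ℂ) (hP : P * P = 1) :
    (P * M * P).det = M.det := by
  have h : P.det * P.det = 1 := by rw [← det_mul, hP, det_one]
  rw [det_mul, det_mul]
  calc P.det * M.det * P.det = M.det * (P.det * P.det) := by ring
  _ = M.det := by rw [h, mul_one]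

lemma conj_mul_split {n : ℕ} {R : Type*} [CommRing R] (P X Y : Matrix (Fin n) (Fin n) R)
    (hP : P * P = 1) : P * (X * Y) * P = (P * X * P) * (P * Y * P) := by
  calc (P * (X * Y)) * P = P * X * (1 : Matrix (Fin n) (Fin n) R) * Y * P := by noncomm_ring
  _ = P * X * (P * P) * Y * P := by rw [hP]
  _ = (P * X * P) * (P * Y * P) := by noncomm_ring

lemma det_smul_one_sub_mul {n : ℕ} (w : ℂ) (X Y : Matrix (Fin n) (Fin n) ℂ) :
    (w • (1 : Matrix (Fin n) (Fin n) ℂ) - X * Y).det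
      = (w • (1 : Matrix (Fin n) (Fin n) ℂ) - Y * X).det := by
  rcases eq_or_ne w 0 with h | h
  · simp only [h, zero_smul, zero_sub, det_neg, det_mul]
    ring
  · have e : ∀ Z W : Matrix (Fin n) (Fin n) ℂ,
        w • (1 : Matrix (Fin n) (Fin n) ℂ) - Z * W = w • (1 - w⁻¹ • (Z * W)) := by
      intro Z W
      rw [smul_sub, smul_inv_smul₀ h]
    rw [e X Y, e Y X, det_smul, det_smul]
    congr 1
    rw [← smul_mul_assoc, det_one_sub_mul_comm, mul_smul_comm]

lemma fin3_chain_iff (a b c : Fin 3) : (a = 0 ∧ b = 1 ∧ c = 2) ↔ (a < b ∧ b < c) := by omega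

lemma indprod_of_not {a b c : Fin 3} (h : ¬(a = 0 ∧ b = 1 ∧ c = 2)) :
    (if a = 0 then (1:ℝ) else 0) * (if b = 1 then 1 else 0) * (if c = 2 then 1 else 0) = 0 := by
  by_cases h1 : a = 0 <;> by_cases h2 : b = 1 <;> by_cases h3 : c = 2 <;>
    simp [h1, h2, h3] at * <;> tauto

end Helpers

theorem stmt10 {n : ℕ} (A : Matrix (Fin n) (Fin n) ℝ) (L : Fin n → Fin 3)
    (hnonneg : ∀ i j, 0 ≤ A i j)
    (hdiag : ∀ i j, L i = L j → A i j = 0)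
    (Al Au : Matrix (Fin n) (Fin n) ℝ)
    (hAl : ∀ i j, Al i j = if L j < L i then A i j else 0)
    (hAu : ∀ i j, Au i j = if L i < L j then A i j else 0)
    (lay : Fin 3 → Matrix (Fin n) (Fin n) ℝ)
    (hlay : ∀ j i k, (lay j) i k = if L i = j then A i k else if i = k then 1 else 0)
    (P : Matrix (Fin n) (Fin n) ℝ)
    (hPperm : ∃ σ : Equiv.Perm (Fin n), P = (Equiv.toPEquiv σ).toMatrix)
    (hPsym : Pᵀ = P) (hP2 : P * P = 1)
    (hlP : Al * P = P * Auᵀ) (huP : Au * P = P * Alᵀ) :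
    spectrum ℂ ((lay 2 * lay 1 * lay 0).map (algebraMap ℝ ℂ))
      = spectrum ℂ ((lay 0 * lay 1 * lay 2).map (algebraMap ℝ ℂ)) := by
  classical
  obtain ⟨σ, hP⟩ := hPperm
  -- basic facts about P as permutation matrix
  have hPl : ∀ M : Matrix (Fin n) (Fin n) ℝ, P * M = M.submatrix σ id := by
    intro M; rw [hP]; exact PEquiv.toMatrix_toPEquiv_mul σ M
  have hPr : ∀ M : Matrix (Fin n) (Fin n) ℝ, M * P = M.submatrix id σ.symm := by
    intro M; rw [hP]; exact PEquiv.mul_toMatrix_toPEquiv M σ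
  have hinv : ∀ i, σ (σ i) = i := by
    intro i
    have h := hP2
    rw [hPl P] at h
    have h2 := congrFun (congrFun h i) i
    rw [Matrix.submatrix_apply, hP, Matrix.one_apply_eq] at h2
    simp only [PEquiv.toMatrix_apply, Equiv.toPEquiv_apply, Option.mem_some_iff, id_eq] at h2
    by_contra hc
    rw [if_neg hc] at h2
    exact zero_ne_one h2
  have hsymm : ∀ j, σ.symm j = σ j := by
    intro j
    rw [Equiv.symm_apply_eq]
    exact (hinv j).symm
  -- entrywise consequences of the hypotheses
  have hl2 : ∀ i m, Al i m = Au (σ m) (σ i) := by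
    intro i m
    have h := hlP
    rw [hPr, hPl] at h
    have h2 := congrFun (congrFun h i) (σ m)
    simpa [Matrix.submatrix_apply, hsymm, hinv, Matrix.transpose_apply] using h2
  have hu2 : ∀ i m, Au i m = Al (σ m) (σ i) := by
    intro i m
    have h := huP
    rw [hPr, hPl] at h
    have h2 := congrFun (congrFun h i) (σ m)
    simpa [Matrix.submatrix_apply, hsymm, hinv, Matrix.transpose_apply] using h2
  have hAlAu : Al + Au = A := by
    ext i j
    rw [Matrix.add_apply, hAl, hAu]
    rcases lt_trichotomy (L i) (L j) with h | h | h
    · rw [if_neg (asymm h), if_pos h, zero_add]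
    · rw [if_neg (by rw [h]; exact lt_irrefl _), if_neg (by rw [h]; exact lt_irrefl _),
        hdiag i j h, add_zero]
    · rw [if_pos h, if_neg (asymm h), add_zero]
  have hA2 : ∀ i m, A i m = A (σ m) (σ i) := by
    intro i m
    have e1 : A i m = Al i m + Au i m := by rw [← hAlAu, Matrix.add_apply]
    have e2 : A (σ m) (σ i) = Al (σ m) (σ i) + Au (σ m) (σ i) := by
      rw [← hAlAu, Matrix.add_apply]
    rw [e1, e2, hl2 i m, hu2 i m]
    exact add_comm _ _
  have hne : ∀ i m, A i m ≠ 0 → L i ≠ L m := fun i m h hL => h (hdiag _ _ hL)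
  have horient : ∀ i m, A i m ≠ 0 → (L i < L m ↔ L (σ i) < L (σ m)) := by
    intro i m hA0
    constructor
    · intro h
      by_contra hc
      have h1 : Au i m = A i m := by rw [hAu, if_pos h]
      have h2 := hu2 i m
      rw [hAl, if_neg hc] at h2
      exact hA0 (by rw [← h1, h2])
    · intro h
      rcases lt_trichotomy (L i) (L m) with h' | h' | h'
      · exact h'
      · exact absurd h' (hne i m hA0)
      · exfalso
        have h1 : Al i m = A i m := by rw [hAl, if_pos h']
        have h2 := hl2 i m
        rw [hAu, if_neg (asymm h)] at h2
        exact hA0 (by rw [← h1, h2])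
  -- layer projectors
  set R : Fin 3 → Matrix (Fin n) (Fin n) ℝ :=
    fun j => Matrix.diagonal (fun i => if L i = j then (1:ℝ) else 0) with hR
  set B : Matrix (Fin n) (Fin n) ℝ := A - 1 with hB
  have hlayR : ∀ j, lay j = 1 + R j * B := by
    intro j
    ext i k
    rw [hlay, Matrix.add_apply, hR]
    rw [show (Matrix.diagonal (fun i => if L i = j then (1:ℝ) else 0) * B) i k
        = (if L i = j then (1:ℝ) else 0) * B i k from Matrix.diagonal_mul _ _ _ _]
    rw [hB, Matrix.sub_apply]
    by_cases h : L i = j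
    · rw [if_pos h, if_pos h, one_mul]
      ring
    · rw [if_neg h, if_neg h, zero_mul, add_zero, Matrix.one_apply]
  have hRsum : R 0 + R 1 + R 2 = 1 := by
    ext i k
    rw [hR]
    simp only [Matrix.add_apply, Matrix.diagonal_apply, Matrix.one_apply]
    by_cases h : i = k
    · subst h
      simp only [if_pos rfl]
      have h3 : L i = 0 ∨ L i = 1 ∨ L i = 2 := by omega
      rcases h3 with h3 | h3 | h3 <;> simp [h3]
    · simp [h]
  have hentry3 : ∀ (a b : Fin 3) (M : Matrix (Fin n) (Fin n) ℝ) (x y : Fin n),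
      (R a * M * R b) x y
        = (if L x = a then (1:ℝ) else 0) * M x y * (if L y = b then 1 else 0) := by
    intro a b M x y
    rw [hR, Matrix.mul_diagonal, Matrix.diagonal_mul]
  have hRB : ∀ (a b : Fin 3), a ≠ b → R a * B * R b = R a * A * R b := by
    intro a b hab
    ext x y
    rw [hentry3, hentry3, hB, Matrix.sub_apply]
    by_cases h1 : L x = a <;> by_cases h2 : L y = b
    · have : x ≠ y := by rintro rfl; rw [h1] at h2; exact hab h2
      rw [Matrix.one_apply_ne this, sub_zero]
    · simp [h2]
    · simp [h1]
    · simp [h1]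
  have hAu_dec : Au = R 0 * A * R 1 + R 0 * A * R 2 + R 1 * A * R 2 := by
    ext i k
    rw [Matrix.add_apply, Matrix.add_apply, hentry3, hentry3, hentry3, hAu]
    have h3 : L i = 0 ∨ L i = 1 ∨ L i = 2 := by omega
    have h4 : L k = 0 ∨ L k = 1 ∨ L k = 2 := by omega
    rcases h3 with h3 | h3 | h3 <;> rcases h4 with h4 | h4 | h4 <;>
      simp [h3, h4, hdiag i k] <;> norm_num [Fin.lt_def, h3, h4]
  have hAl_dec : Al = R 2 * A * R 1 + R 2 * A * R 0 + R 1 * A * R 0 := by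
    ext i k
    rw [Matrix.add_apply, Matrix.add_apply, hentry3, hentry3, hentry3, hAl]
    have h3 : L i = 0 ∨ L i = 1 ∨ L i = 2 := by omega
    have h4 : L k = 0 ∨ L k = 1 ∨ L k = 2 := by omega
    rcases h3 with h3 | h3 | h3 <;> rcases h4 with h4 | h4 | h4 <;>
      simp [h3, h4, hdiag i k] <;> norm_num [Fin.lt_def, h3, h4]
  -- expansion identities
  have hlastU : R 0 * B * R 1 * B * R 2 = R 0 * A * R 1 * A * R 2 := by
    calc R 0 * B * R 1 * B * R 2 = R 0 * B * (R 1 * B * R 2) := by noncomm_ring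
    _ = R 0 * B * (R 1 * A * R 2) := by rw [hRB 1 2 (by decide)]
    _ = (R 0 * B * R 1) * (A * R 2) := by noncomm_ring
    _ = (R 0 * A * R 1) * (A * R 2) := by rw [hRB 0 1 (by decide)]
    _ = R 0 * A * R 1 * A * R 2 := by noncomm_ring
  have hlastW : R 2 * B * R 1 * B * R 0 = R 2 * A * R 1 * A * R 0 := by
    calc R 2 * B * R 1 * B * R 0 = R 2 * B * (R 1 * B * R 0) := by noncomm_ring
    _ = R 2 * B * (R 1 * A * R 0) := by rw [hRB 1 0 (by decide)]
    _ = (R 2 * B * R 1) * (A * R 0) := by noncomm_ring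
    _ = (R 2 * A * R 1) * (A * R 0) := by rw [hRB 2 1 (by decide)]
    _ = R 2 * A * R 1 * A * R 0 := by noncomm_ring
  have hRsum' : R 2 + R 1 + R 0 = 1 := by rw [← hRsum]; abel
  have hI2 : lay 0 * lay 1 * lay 2 = 1 + (1 + Au + R 0 * A * R 1 * A * R 2) * B := by
    rw [hlayR 0, hlayR 1, hlayR 2]
    calc (1 + R 0 * B) * (1 + R 1 * B) * (1 + R 2 * B)
        = 1 + (R 0 + R 1 + R 2) * B + (R 0 * B * R 1 + R 0 * B * R 2 + R 1 * B * R 2) * B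
            + (R 0 * B * R 1 * B * R 2) * B := by noncomm_ring
      _ = 1 + 1 * B + (R 0 * A * R 1 + R 0 * A * R 2 + R 1 * A * R 2) * B
            + (R 0 * A * R 1 * A * R 2) * B := by
          rw [hRsum, hlastU, hRB 0 1 (by decide), hRB 0 2 (by decide), hRB 1 2 (by decide)]
      _ = 1 + (1 + (R 0 * A * R 1 + R 0 * A * R 2 + R 1 * A * R 2)
            + R 0 * A * R 1 * A * R 2) * B := by noncomm_ring
      _ = 1 + (1 + Au + R 0 * A * R 1 * A * R 2) * B := by rw [← hAu_dec]
  have hI1 : lay 2 * lay 1 * lay 0 = 1 + (1 + Al + R 2 * A * R 1 * A * R 0) * B := by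
    rw [hlayR 0, hlayR 1, hlayR 2]
    calc (1 + R 2 * B) * (1 + R 1 * B) * (1 + R 0 * B)
        = 1 + (R 2 + R 1 + R 0) * B + (R 2 * B * R 1 + R 2 * B * R 0 + R 1 * B * R 0) * B
            + (R 2 * B * R 1 * B * R 0) * B := by noncomm_ring
      _ = 1 + 1 * B + (R 2 * A * R 1 + R 2 * A * R 0 + R 1 * A * R 0) * B
            + (R 2 * A * R 1 * A * R 0) * B := by
          rw [hRsum', hlastW, hRB 2 1 (by decide), hRB 2 0 (by decide), hRB 1 0 (by decide)]
      _ = 1 + (1 + (R 2 * A * R 1 + R 2 * A * R 0 + R 1 * A * R 0)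
            + R 2 * A * R 1 * A * R 0) * B := by noncomm_ring
      _ = 1 + (1 + Al + R 2 * A * R 1 * A * R 0) * B := by rw [← hAl_dec]
  -- conjugation identities
  have hPAlT : P * Alᵀ * P = Au := by
    have h := congrArg (fun X => X * P) huP
    rw [mul_assoc, hP2, mul_one] at h
    exact h.symm
  have hPAuT : P * Auᵀ * P = Al := by
    have h := congrArg (fun X => X * P) hlP
    rw [mul_assoc, hP2, mul_one] at h
    exact h.symm
  have hWentry : ∀ (a b c : Fin 3) (x y : Fin n), (R a * A * R b * A * R c) x y
      = (∑ m, (if L x = a then (1:ℝ) else 0) * A x m * (if L m = b then 1 else 0) * A m y)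
          * (if L y = c then 1 else 0) := by
    intro a b c x y
    calc (R a * A * R b * A * R c) x y
        = (R a * A * R b * A) x y * (if L y = c then 1 else 0) := by
          rw [hR]; exact Matrix.mul_diagonal _ _ _ _
      _ = (∑ m, (R a * A * R b) x m * A m y) * (if L y = c then 1 else 0) := by
          rw [Matrix.mul_apply]
      _ = (∑ m, (if L x = a then (1:ℝ) else 0) * A x m * (if L m = b then 1 else 0) * A m y)
          * (if L y = c then 1 else 0) := by
          refine congrArg (· * _) (Finset.sum_congr rfl fun m _ => ?_)
          rw [hentry3]
  have hmain : ∀ x y : Fin n, (R 2 * A * R 1 * A * R 0) (σ y) (σ x)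
      = (R 0 * A * R 1 * A * R 2) x y := by
    intro x y
    rw [hWentry 2 1 0 (σ y) (σ x), hWentry 0 1 2 x y]
    have hre : (∑ m, (if L (σ y) = 2 then (1:ℝ) else 0) * A (σ y) m * (if L m = 1 then 1 else 0)
          * A m (σ x))
        = ∑ m, (if L (σ y) = 2 then (1:ℝ) else 0) * A (σ y) (σ m) * (if L (σ m) = 1 then 1 else 0)
          * A (σ m) (σ x) :=
      (Equiv.sum_comp σ (fun m => (if L (σ y) = 2 then (1:ℝ) else 0) * A (σ y) m
        * (if L m = 1 then 1 else 0) * A m (σ x))).symm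
    rw [hre, Finset.sum_mul, Finset.sum_mul]
    refine Finset.sum_congr rfl fun m _ => ?_
    rw [← hA2 m y, ← hA2 x m]
    by_cases hxm : A x m = 0
    · simp [hxm]
    by_cases hmy : A m y = 0
    · simp [hmy]
    have hiff : (L x = 0 ∧ L m = 1 ∧ L y = 2) ↔ (L (σ x) = 0 ∧ L (σ m) = 1 ∧ L (σ y) = 2) := by
      rw [fin3_chain_iff, fin3_chain_iff, horient x m hxm, horient m y hmy]
    have e : (if L (σ x) = 0 then (1:ℝ) else 0) * (if L (σ m) = 1 then 1 else 0)
          * (if L (σ y) = 2 then 1 else 0)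
        = (if L x = 0 then (1:ℝ) else 0) * (if L m = 1 then 1 else 0)
          * (if L y = 2 then 1 else 0) := by
      by_cases h : L x = 0 ∧ L m = 1 ∧ L y = 2
      · obtain ⟨ha, hb, hc⟩ := h
        obtain ⟨ha2, hb2, hc2⟩ := hiff.mp ⟨ha, hb, hc⟩
        rw [if_pos ha, if_pos hb, if_pos hc, if_pos ha2, if_pos hb2, if_pos hc2]
      · rw [indprod_of_not h, indprod_of_not (fun hh => h (hiff.mpr hh))]
    linear_combination (A x m * A m y) * e
  have hPWU : P * (R 2 * A * R 1 * A * R 0)ᵀ * P = R 0 * A * R 1 * A * R 2 := by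
    ext i k
    rw [hPr, hPl, Matrix.submatrix_apply, Matrix.submatrix_apply, Matrix.transpose_apply,
      hsymm, id_eq]
    exact hmain i k
  have hPKT : P * (1 + Al + R 2 * A * R 1 * A * R 0)ᵀ * P
      = 1 + Au + R 0 * A * R 1 * A * R 2 := by
    rw [Matrix.transpose_add, Matrix.transpose_add, Matrix.transpose_one]
    calc P * (1 + Alᵀ + (R 2 * A * R 1 * A * R 0)ᵀ) * P
        = P * 1 * P + P * Alᵀ * P + P * (R 2 * A * R 1 * A * R 0)ᵀ * P := by noncomm_ring
      _ = 1 + Au + R 0 * A * R 1 * A * R 2 := by rw [mul_one, hP2, hPAlT, hPWU]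
  have hPBT : P * Bᵀ * P = B := by
    have hPAT : P * Aᵀ * P = A := by
      have h1 : Aᵀ = Alᵀ + Auᵀ := by rw [← hAlAu, Matrix.transpose_add]
      calc P * Aᵀ * P = P * Alᵀ * P + P * Auᵀ * P := by rw [h1]; noncomm_ring
        _ = A := by rw [hPAlT, hPAuT, ← hAlAu, add_comm]
    calc P * Bᵀ * P = P * Aᵀ * P - P * P := by
          rw [hB, Matrix.transpose_sub, Matrix.transpose_one]; noncomm_ring
      _ = A - 1 := by rw [hPAT, hP2]
      _ = B := hB.symm
  -- pass to ℂ
  set φ : Matrix (Fin n) (Fin n) ℝ →+* Matrix (Fin n) (Fin n) ℂ :=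
    (algebraMap ℝ ℂ).mapMatrix with hφdef
  have hφ : ∀ M : Matrix (Fin n) (Fin n) ℝ, M.map (algebraMap ℝ ℂ) = φ M := fun M => rfl
  have hφT : ∀ M : Matrix (Fin n) (Fin n) ℝ, (φ M)ᵀ = φ Mᵀ := by
    intro M
    rw [← hφ, ← hφ, Matrix.transpose_map]
  set Kc := φ (1 + Al + R 2 * A * R 1 * A * R 0) with hKc
  set K'c := φ (1 + Au + R 0 * A * R 1 * A * R 2) with hK'c
  set Bc := φ B with hBc
  set Pc := φ P with hPc
  have hcP2 : Pc * Pc = 1 := by rw [hPc, ← _root_.map_mul, hP2, _root_.map_one]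
  have hcB : Pc * Bcᵀ * Pc = Bc := by
    rw [hPc, hBc, hφT, ← _root_.map_mul, ← _root_.map_mul, hPBT]
  have hcK : Pc * Kcᵀ * Pc = K'c := by
    rw [hPc, hKc, hK'c, hφT, ← _root_.map_mul, ← _root_.map_mul, hPKT]
  have hc1 : (lay 2 * lay 1 * lay 0).map (algebraMap ℝ ℂ) = 1 + Kc * Bc := by
    rw [hφ, hI1, _root_.map_add, _root_.map_mul, _root_.map_one, hKc, hBc]
  have hc2 : (lay 0 * lay 1 * lay 2).map (algebraMap ℝ ℂ) = 1 + K'c * Bc := by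
    rw [hφ, hI2, _root_.map_add, _root_.map_mul, _root_.map_one, hK'c, hBc]
  rw [hc1, hc2]
  ext z
  rw [spec_mem_iff, spec_mem_iff]
  have harr : ∀ X Y : Matrix (Fin n) (Fin n) ℂ,
      z • (1 : Matrix (Fin n) (Fin n) ℂ) - (1 + X * Y) = (z - 1) • 1 - X * Y := by
    intro X Y
    rw [sub_smul, one_smul]
    abel
  have hdet : (z • (1 : Matrix (Fin n) (Fin n) ℂ) - (1 + Kc * Bc)).det
      = (z • (1 : Matrix (Fin n) (Fin n) ℂ) - (1 + K'c * Bc)).det := by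
    rw [harr, harr, det_smul_one_sub_mul]
    have htr : ((z - 1) • (1 : Matrix (Fin n) (Fin n) ℂ) - Bc * Kc).det
        = ((z - 1) • (1 : Matrix (Fin n) (Fin n) ℂ) - Kcᵀ * Bcᵀ).det := by
      rw [← det_transpose ((z - 1) • 1 - Bc * Kc), Matrix.transpose_sub, Matrix.transpose_smul,
        Matrix.transpose_one, Matrix.transpose_mul]
    rw [htr]
    have hconj : (z - 1) • (1 : Matrix (Fin n) (Fin n) ℂ) - K'c * Bc
        = Pc * ((z - 1) • (1 : Matrix (Fin n) (Fin n) ℂ) - Kcᵀ * Bcᵀ) * Pc := by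
      rw [mul_sub, sub_mul]
      congr 1
      · rw [mul_smul_comm, mul_one, smul_mul_assoc, hcP2]
      · rw [conj_mul_split Pc _ _ hcP2, hcK, hcB]
    rw [hconj, det_conj_perm _ _ hcP2]
  rw [hdet]
end

section
/- Let M be an n×n nonnegative matrix (n ≥ 1). Then ρ(M) is an eigenvalue of M (i.e., M has a real nonnegative eigenvalue equal to its spectral radius), and there is a nonnegative (nonzero) eigenvector of M corresponding to ρ(M). -/
open Matrix

lemma eig_mem_spec {K : Type*} [Field K] {n : ℕ} (A : Matrix (Fin n) (Fin n) K)
    (μ : K) (v : Fin n → K) (hv : v ≠ 0) (h : A.mulVec v = μ • v) :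
    μ ∈ spectrum K A := by
  rw [← AlgEquiv.spectrum_eq (Matrix.toLinAlgEquiv' (R := K)) A]
  exact Module.End.hasEigenvalue_iff_mem_spectrum.mp
    (Module.End.hasEigenvalue_of_hasEigenvector
      ⟨Module.End.mem_eigenspace_iff.mpr (by rw [Matrix.toLinAlgEquiv'_apply, h]), hv⟩)

lemma spec_eig {K : Type*} [Field K] {n : ℕ} (A : Matrix (Fin n) (Fin n) K)
    (μ : K) (h : μ ∈ spectrum K A) :
    ∃ v : Fin n → K, v ≠ 0 ∧ A.mulVec v = μ • v := by
  rw [← AlgEquiv.spectrum_eq (Matrix.toLinAlgEquiv' (R := K)) A] at h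
  obtain ⟨v, hv⟩ := (Module.End.HasEigenvalue.exists_hasEigenvector
    (Module.End.hasEigenvalue_iff_mem_spectrum.mpr h))
  exact ⟨v, hv.2, by rw [← Matrix.toLinAlgEquiv'_apply]; exact Module.End.mem_eigenspace_iff.mp hv.1⟩

lemma mulVec_apply' {K : Type*} [NonUnitalNonAssocSemiring K] {n : ℕ}
    (A : Matrix (Fin n) (Fin n) K) (v : Fin n → K) (i : Fin n) :
    A.mulVec v i = ∑ j, A i j * v j := rfl

lemma pf_pos {n : ℕ} (hn : 0 < n) (A : Matrix (Fin n) (Fin n) ℝ) (hA : ∀ i j, 0 < A i j) :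
    ∃ (l : ℝ) (u : Fin n → ℝ), 0 ≤ l ∧ (∀ i, 0 ≤ u i) ∧ (∑ i, u i) = 1 ∧
      A.mulVec u = l • u ∧
      ∀ (c : ℝ) (w : Fin n → ℝ), (∀ i, 0 ≤ w i) → w ≠ 0 →
        (∀ i, c * w i ≤ A.mulVec w i) → c ≤ l := by
  haveI : Nonempty (Fin n) := ⟨⟨0, hn⟩⟩
  set T : Set (ℝ × (Fin n → ℝ)) :=
    {p | 0 ≤ p.1 ∧ (∀ i, 0 ≤ p.2 i) ∧ (∑ i, p.2 i) = 1 ∧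
      ∀ i, p.1 * p.2 i ≤ A.mulVec p.2 i} with hT
  have hne : T.Nonempty := by
    refine ⟨(0, fun _ => (n : ℝ)⁻¹), le_refl _, fun i => by positivity, ?_, fun i => ?_⟩
    · simp [Finset.sum_const, Finset.card_univ]
      field_simp
    · rw [zero_mul, mulVec_apply']
      refine Finset.sum_nonneg fun j _ => mul_nonneg (hA i j).le ?_
      show (0:ℝ) ≤ (n:ℝ)⁻¹
      positivity
  have hTc : IsClosed T := by
    have h1 : IsClosed {p : ℝ × (Fin n → ℝ) | 0 ≤ p.1} :=
      isClosed_le continuous_const continuous_fst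
    have h2 : IsClosed {p : ℝ × (Fin n → ℝ) | ∀ i, 0 ≤ p.2 i} := by
      have : {p : ℝ × (Fin n → ℝ) | ∀ i, 0 ≤ p.2 i} = ⋂ i, {p | 0 ≤ p.2 i} := by
        ext p; simp
      rw [this]
      exact isClosed_iInter fun i =>
        isClosed_le continuous_const ((continuous_apply i).comp continuous_snd)
    have h3 : IsClosed {p : ℝ × (Fin n → ℝ) | (∑ i, p.2 i) = 1} :=
      isClosed_eq (continuous_finset_sum _ fun i _ =>
        (continuous_apply i).comp continuous_snd) continuous_const
    have h4 : IsClosed {p : ℝ × (Fin n → ℝ) | ∀ i, p.1 * p.2 i ≤ A.mulVec p.2 i} := by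
      have : {p : ℝ × (Fin n → ℝ) | ∀ i, p.1 * p.2 i ≤ A.mulVec p.2 i}
          = ⋂ i, {p | p.1 * p.2 i ≤ ∑ j, A i j * p.2 j} := by
        ext p; simp [mulVec_apply']
      rw [this]
      refine isClosed_iInter fun i => isClosed_le ?_ ?_
      · exact continuous_fst.mul ((continuous_apply i).comp continuous_snd)
      · exact continuous_finset_sum _ fun j _ =>
          continuous_const.mul ((continuous_apply j).comp continuous_snd)
    have : T = {p : ℝ × (Fin n → ℝ) | 0 ≤ p.1} ∩ ({p | ∀ i, 0 ≤ p.2 i} ∩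
        ({p | (∑ i, p.2 i) = 1} ∩ {p | ∀ i, p.1 * p.2 i ≤ A.mulVec p.2 i})) := rfl
    rw [this]
    exact h1.inter (h2.inter (h3.inter h4))
  set B : ℝ := ∑ i, ∑ j, A i j with hB
  have hsub : T ⊆ Set.Icc (0 : ℝ) B ×ˢ Set.Icc (0 : Fin n → ℝ) 1 := by
    rintro ⟨c, w⟩ ⟨hc0, hw0, hws, hcw⟩
    have hwle : ∀ j, w j ≤ 1 := by
      intro j
      calc w j ≤ ∑ i, w i := Finset.single_le_sum (fun i _ => hw0 i) (Finset.mem_univ j)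
        _ = 1 := hws
    constructor
    · refine ⟨hc0, ?_⟩
      calc c = ∑ i, c * w i := by rw [← Finset.mul_sum, hws, mul_one]
        _ ≤ ∑ i, A.mulVec w i := Finset.sum_le_sum fun i _ => hcw i
        _ = ∑ i, ∑ j, A i j * w j := by simp [mulVec_apply']
        _ ≤ ∑ i, ∑ j, A i j := by
            refine Finset.sum_le_sum fun i _ => Finset.sum_le_sum fun j _ => ?_
            nlinarith [hA i j, hw0 j, hwle j]
    · exact ⟨fun j => hw0 j, fun j => hwle j⟩
  have hTcomp : IsCompact T :=
    ((isCompact_Icc.prod isCompact_Icc)).of_isClosed_subset hTc hsub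
  obtain ⟨l, hlmem, hub⟩ := (hTcomp.image continuous_fst).exists_isGreatest
    (hne.image _)
  obtain ⟨⟨l', u⟩, hpu, hfst⟩ := hlmem
  simp only at hfst
  subst hfst
  obtain ⟨hl0, hu0, hus, hlu⟩ := hpu
  have hmax : ∀ (c : ℝ) (w : Fin n → ℝ), (∀ i, 0 ≤ w i) → w ≠ 0 →
      (∀ i, c * w i ≤ A.mulVec w i) → c ≤ l' := by
    intro c w hw0 hwne hcw
    rcases le_or_gt c 0 with hc | hc
    · exact hc.trans hl0
    · obtain ⟨j0, hj0⟩ : ∃ j, w j ≠ 0 := by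
        by_contra h
        push_neg at h
        exact hwne (funext h)
      have hj0' : 0 < w j0 := lt_of_le_of_ne (hw0 j0) (Ne.symm hj0)
      have hs : 0 < ∑ i, w i :=
        lt_of_lt_of_le hj0' (Finset.single_le_sum (fun i _ => hw0 i) (Finset.mem_univ j0))
      set s : ℝ := ∑ i, w i
      have hmem : (c, s⁻¹ • w) ∈ T := by
        refine ⟨hc.le, fun i => by
          simp only [Pi.smul_apply, smul_eq_mul]
          exact mul_nonneg (inv_nonneg.mpr hs.le) (hw0 i), ?_, fun i => ?_⟩
        · simp only [Pi.smul_apply, smul_eq_mul, ← Finset.mul_sum]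
          field_simp
          rfl
        · rw [A.mulVec_smul]
          simp only [Pi.smul_apply, smul_eq_mul]
          rw [mul_left_comm]
          exact mul_le_mul_of_nonneg_left (hcw i) (inv_nonneg.mpr hs.le)
      exact hub ⟨(c, s⁻¹ • w), hmem, rfl⟩
  refine ⟨l', u, hl0, hu0, hus, ?_, hmax⟩
  by_contra hne'
  obtain ⟨i0, hi0⟩ : ∃ i, A.mulVec u i ≠ l' * u i := by
    by_contra h
    push_neg at h
    exact hne' (funext fun i => by rw [h i, Pi.smul_apply, smul_eq_mul])
  have hi0' : l' * u i0 < A.mulVec u i0 := lt_of_le_of_ne (hlu i0) (Ne.symm hi0)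
  set y : Fin n → ℝ := A.mulVec u with hy
  obtain ⟨j0, hj0⟩ : ∃ j, 0 < u j := by
    by_contra h
    push_neg at h
    have : (∑ i, u i) = 0 :=
      Finset.sum_eq_zero fun i _ => le_antisymm (h i) (hu0 i)
    rw [hus] at this; norm_num at this
  have hypos : ∀ i, 0 < y i := fun i =>
    lt_of_lt_of_le (mul_pos (hA i j0) hj0)
      (Finset.single_le_sum (fun j _ => mul_nonneg (hA i j).le (hu0 j)) (Finset.mem_univ j0))
  set z : Fin n → ℝ := y - l' • u with hz
  have hz0 : ∀ i, 0 ≤ z i := fun i => by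
    simp only [hz, Pi.sub_apply, Pi.smul_apply, smul_eq_mul, sub_nonneg]
    exact hlu i
  have hzi0 : 0 < z i0 := by
    simp only [hz, Pi.sub_apply, Pi.smul_apply, smul_eq_mul, sub_pos]
    exact hi0'
  have hAz : ∀ i, 0 < A.mulVec z i := fun i =>
    lt_of_lt_of_le (mul_pos (hA i i0) hzi0)
      (Finset.single_le_sum (fun j _ => mul_nonneg (hA i j).le (hz0 j)) (Finset.mem_univ i0))
  have hAy : ∀ i, A.mulVec y i = l' * y i + A.mulVec z i := by
    intro i
    have : A.mulVec z = A.mulVec y - l' • y := by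
      rw [hz, A.mulVec_sub, A.mulVec_smul, hy]
    rw [this]
    simp only [Pi.sub_apply, Pi.smul_apply, smul_eq_mul]
    ring
  set c : ℝ := Finset.univ.inf' Finset.univ_nonempty (fun i => A.mulVec y i / y i) with hc
  have hcl : l' < c := by
    rw [hc, Finset.lt_inf'_iff]
    intro i _
    rw [lt_div_iff₀ (hypos i), hAy i]
    nlinarith [hAz i]
  have hcw : ∀ i, c * y i ≤ A.mulVec y i := by
    intro i
    have := Finset.inf'_le (fun i => A.mulVec y i / y i)
      (Finset.mem_univ i)
    rw [← hc] at this
    calc c * y i ≤ (A.mulVec y i / y i) * y i :=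
          mul_le_mul_of_nonneg_right this (hypos i).le
      _ = A.mulVec y i := div_mul_cancel₀ _ (hypos i).ne'
  have hyne : y ≠ 0 := by
    intro h
    have := hypos i0
    rw [h] at this
    norm_num at this
  linarith [hmax c y (fun i => (hypos i).le) hyne hcw]


theorem stmt13 {n : ℕ} (hn : 0 < n) (M : Matrix (Fin n) (Fin n) ℝ)
    (hM : ∀ i j, 0 ≤ M i j) :
    specRad M ∈ spectrum ℝ M ∧
    ∃ v : Fin n → ℝ, v ≠ 0 ∧ (∀ i, 0 ≤ v i) ∧ M.mulVec v = specRad M • v := by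
  haveI : Nonempty (Fin n) := ⟨⟨0, hn⟩⟩
  set t : ℕ → ℝ := fun k => ((k : ℝ) + 1)⁻¹ with ht
  have htpos : ∀ k, 0 < t k := fun k => by positivity
  have htle1 : ∀ k, t k ≤ 1 := fun k => by
    rw [ht]
    rw [inv_le_one_iff₀]
    right; linarith [Nat.cast_nonneg (α := ℝ) k]
  set A : ℕ → Matrix (Fin n) (Fin n) ℝ :=
    fun k => M + t k • (Matrix.of fun _ _ => (1 : ℝ)) with hA
  have hAapp : ∀ k i j, A k i j = M i j + t k := by
    intro k i j
    simp [hA, Matrix.add_apply, Matrix.smul_apply]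
  have hApos : ∀ k, ∀ i j, 0 < A k i j := fun k i j => by
    rw [hAapp]; linarith [hM i j, htpos k]
  choose l u hl0 hu0 hus heq hmax using fun k => pf_pos hn (A k) (hApos k)
  set B : ℝ := ∑ i : Fin n, ∑ j : Fin n, (M i j + 1) with hB
  have hlB : ∀ k, l k ≤ B := by
    intro k
    have hule : ∀ j, u k j ≤ 1 := fun j =>
      le_trans (Finset.single_le_sum (fun i _ => hu0 k i) (Finset.mem_univ j))
        (le_of_eq (hus k))
    calc l k = ∑ i, l k * u k i := by rw [← Finset.mul_sum, hus k, mul_one]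
      _ = ∑ i, (A k *ᵥ u k) i := by
          refine Finset.sum_congr rfl fun i _ => ?_
          rw [heq k, Pi.smul_apply, smul_eq_mul]
      _ = ∑ i, ∑ j, A k i j * u k j := by simp [mulVec_apply']
      _ ≤ ∑ i, ∑ j, (M i j + 1) := by
          refine Finset.sum_le_sum fun i _ => Finset.sum_le_sum fun j _ => ?_
          rw [hAapp]
          nlinarith [hM i j, htpos k, htle1 k, hu0 k j, hule j, (hApos k i j).le]
  have hp : ∀ k, (l k, u k) ∈ Set.Icc (0:ℝ) B ×ˢ Set.Icc (0 : Fin n → ℝ) 1 := by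
    intro k
    refine ⟨⟨hl0 k, hlB k⟩, fun j => hu0 k j, fun j =>
      le_trans (Finset.single_le_sum (fun i _ => hu0 k i) (Finset.mem_univ j))
        (le_of_eq (hus k))⟩
  obtain ⟨⟨li, ui⟩, hmemC, φ, hφ, htend⟩ :=
    (isCompact_Icc.prod isCompact_Icc).tendsto_subseq hp
  have htl : Filter.Tendsto (fun k => l (φ k)) Filter.atTop (nhds li) :=
    (continuous_fst.tendsto _).comp htend
  have htu : ∀ i, Filter.Tendsto (fun k => u (φ k) i) Filter.atTop (nhds (ui i)) :=
    fun i => (((continuous_apply i).comp continuous_snd).tendsto _).comp htend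
  have httend : Filter.Tendsto (fun k => t (φ k)) Filter.atTop (nhds 0) := by
    have h1 : Filter.Tendsto t Filter.atTop (nhds 0) := by
      have := tendsto_one_div_add_atTop_nhds_zero_nat (𝕜 := ℝ)
      simpa [ht, one_div] using this
    exact h1.comp hφ.tendsto_atTop
  have hli0 : 0 ≤ li := hmemC.1.1
  have hui0 : ∀ i, 0 ≤ ui i := fun i => hmemC.2.1 i
  have huis : ∑ i, ui i = 1 := by
    have h1 : Filter.Tendsto (fun k => ∑ i, u (φ k) i) Filter.atTop (nhds (∑ i, ui i)) :=
      tendsto_finset_sum _ fun i _ => htu i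
    have h2 : Filter.Tendsto (fun k => ∑ i, u (φ k) i) Filter.atTop (nhds 1) := by
      simpa [hus] using (tendsto_const_nhds : Filter.Tendsto (fun _ : ℕ => (1:ℝ)) _ _)
    exact tendsto_nhds_unique h1 h2
  have huine : ui ≠ 0 := by
    intro h
    rw [h] at huis
    simp at huis
  have heqi : M.mulVec ui = li • ui := by
    funext i
    have h1 : Filter.Tendsto (fun k => (A (φ k)).mulVec (u (φ k)) i)
        Filter.atTop (nhds ((M.mulVec ui) i)) := by
      have : ∀ k, (A (φ k)).mulVec (u (φ k)) i = ∑ j, (M i j + t (φ k)) * u (φ k) j := by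
        intro k
        rw [mulVec_apply']
        exact Finset.sum_congr rfl fun j _ => by rw [hAapp]
      simp only [this, mulVec_apply']
      have hsum : Filter.Tendsto (fun k => ∑ j, (M i j + t (φ k)) * u (φ k) j)
          Filter.atTop (nhds (∑ j, (M i j + 0) * ui j)) :=
        tendsto_finset_sum _ fun j _ =>
          ((tendsto_const_nhds.add httend).mul (htu j))
      simpa using hsum
    have h2 : Filter.Tendsto (fun k => (A (φ k)).mulVec (u (φ k)) i)
        Filter.atTop (nhds (li * ui i)) := by
      have : ∀ k, (A (φ k)).mulVec (u (φ k)) i = l (φ k) * u (φ k) i := by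
        intro k
        rw [heq (φ k), Pi.smul_apply, smul_eq_mul]
      simp only [this]
      exact htl.mul (htu i)
    rw [Pi.smul_apply, smul_eq_mul]
    exact tendsto_nhds_unique h1 h2
  have hub : ∀ μ ∈ spectrum ℂ (M.map (algebraMap ℝ ℂ)), ‖μ‖ ≤ li := by
    intro μ hμ
    obtain ⟨x, hxne, hx⟩ := spec_eig _ μ hμ
    set w : Fin n → ℝ := fun i => ‖x i‖ with hw
    have hw0 : ∀ i, 0 ≤ w i := fun i => norm_nonneg _
    have hwne : w ≠ 0 := by
      intro h
      apply hxne
      funext i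
      have : ‖x i‖ = 0 := congrFun h i
      simpa using this
    have hkey : ∀ i, ‖μ‖ * w i ≤ M.mulVec w i := by
      intro i
      have h1 : ‖μ‖ * w i = ‖(M.map (algebraMap ℝ ℂ)).mulVec x i‖ := by
        rw [hx, Pi.smul_apply, smul_eq_mul, norm_mul]
      rw [h1, mulVec_apply']
      calc ‖∑ j, (M.map (algebraMap ℝ ℂ)) i j * x j‖
          ≤ ∑ j, ‖(M.map (algebraMap ℝ ℂ)) i j * x j‖ :=
            norm_sum_le _ _
        _ = ∑ j, M i j * w j := by
            refine Finset.sum_congr rfl fun j _ => ?_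
            rw [norm_mul, Matrix.map_apply]
            simp [hw, Complex.norm_real, abs_of_nonneg (hM i j)]
        _ = M.mulVec w i := (mulVec_apply' M w i).symm
    have hkeyA : ∀ k i, ‖μ‖ * w i ≤ (A k).mulVec w i := by
      intro k i
      refine (hkey i).trans ?_
      rw [mulVec_apply', mulVec_apply']
      refine Finset.sum_le_sum fun j _ => ?_
      rw [hAapp]
      nlinarith [htpos k, hw0 j]
    have hlk : ∀ k, ‖μ‖ ≤ l k := fun k =>
      hmax k _ w hw0 hwne (hkeyA k)
    exact ge_of_tendsto htl (Filter.Eventually.of_forall fun k => hlk (φ k))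
  have hlmem : (li : ℂ) ∈ spectrum ℂ (M.map (algebraMap ℝ ℂ)) := by
    refine eig_mem_spec _ _ (fun i => ((ui i : ℝ) : ℂ)) ?_ ?_
    · intro h
      apply huine
      funext i
      have : ((ui i : ℝ) : ℂ) = 0 := congrFun h i
      exact_mod_cast this
    · funext i
      rw [mulVec_apply']
      have : ∀ j, (M.map (algebraMap ℝ ℂ)) i j * (ui j : ℂ) = ((M i j * ui j : ℝ) : ℂ) := by
        intro j
        rw [Matrix.map_apply]
        push_cast
        rfl
      rw [Finset.sum_congr rfl fun j _ => this j, ← Complex.ofReal_sum]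
      have h2 : ∑ j, M i j * ui j = li * ui i := by
        rw [← mulVec_apply', heqi, Pi.smul_apply, smul_eq_mul]
      rw [h2, Pi.smul_apply, smul_eq_mul]
      push_cast
      ring
  have hspec : specRad M = li := by
    refine IsGreatest.csSup_eq ⟨⟨(li : ℂ), hlmem, ?_⟩, ?_⟩
    · simp [Complex.norm_real, abs_of_nonneg hli0]
    · rintro y ⟨μ, hμ, rfl⟩
      exact hub μ hμ
  rw [hspec]
  exact ⟨eig_mem_spec M li ui huine heqi, ui, huine, hui0, heqi⟩
end

section
/- Let A_l and A_u be the strictly block-lower and strictly block-upper triangular parts of a J×J-block matrix A with zero diagonal blocks, and let 𝒜_j (j = 1,...,J) be the layer matrices (identity diagonal blocks except the j-th block row equal to that of A). Then the ordered product 𝒜_J 𝒜_{J-1} ⋯ 𝒜_1 equals (I − A_l)^{-1} A_u provided (I − A_l) is invertible; equivalently, (I − A_l)(𝒜_J ⋯ 𝒜_1) = A_u. -/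
open Matrix

theorem stmt19 {n J : ℕ} (A : Matrix (Fin n) (Fin n) ℝ) (L : Fin n → Fin J)
    (hdiag : ∀ i j, L i = L j → A i j = 0)
    (Al Au : Matrix (Fin n) (Fin n) ℝ)
    (hAl : ∀ i j, Al i j = if L j < L i then A i j else 0)
    (hAu : ∀ i j, Au i j = if L i < L j then A i j else 0)
    (lay : Fin J → Matrix (Fin n) (Fin n) ℝ)
    (hlay : ∀ j i k, (lay j) i k = if L i = j then A i k else if i = k then 1 else 0)
    (Atil : Matrix (Fin n) (Fin n) ℝ)
    (hAtil : Atil = (((List.finRange J).map lay).reverse).prod)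
    (hinv : IsUnit (1 - Al)) :
    (1 - Al) * Atil = Au ∧ Atil = (1 - Al)⁻¹ * Au := by
  -- A decomposes as Al + Au
  have hA : ∀ i j, A i j = Al i j + Au i j := by
    intro i j
    rw [hAl, hAu]
    rcases lt_trichotomy (L i) (L j) with h | h | h
    · simp [h, not_lt.mpr h.le]
    · simp [hdiag i j h, h.symm ▸ lt_irrefl (L i)]
    · simp [h, not_lt.mpr h.le]
  -- row facts for multiplication by a layer
  have hrow_id : ∀ (j : Fin J) (M : Matrix (Fin n) (Fin n) ℝ) (i k : Fin n),
      L i ≠ j → (lay j * M) i k = M i k := by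
    intro j M i k hij
    rw [Matrix.mul_apply]
    have : ∀ x, lay j i x * M x k = (if i = x then M x k else 0) := by
      intro x
      rw [hlay, if_neg hij]
      by_cases h : i = x <;> simp [h]
    simp [this]
  have hrow_a : ∀ (j : Fin J) (M : Matrix (Fin n) (Fin n) ℝ) (i k : Fin n),
      L i = j → (lay j * M) i k = ∑ x, A i x * M x k := by
    intro j M i k hij
    rw [Matrix.mul_apply]
    refine Finset.sum_congr rfl fun x _ => ?_
    rw [hlay]
    simp [hij]
  -- main induction
  have key : ∀ m : ℕ, m ≤ J →
      (∀ i k : Fin n, m ≤ (L i : ℕ) →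
        ((((List.finRange J).take m).map lay).reverse.prod) i k = if i = k then 1 else 0) ∧
      (∀ i k : Fin n, (L i : ℕ) < m →
        ((((List.finRange J).take m).map lay).reverse.prod) i k =
          ∑ x, Al i x * ((((List.finRange J).take m).map lay).reverse.prod) x k + Au i k) := by
    intro m
    induction m with
    | zero =>
      intro _
      constructor
      · intro i k _
        simp [Matrix.one_apply]
      · intro i k h
        exact absurd h (Nat.not_lt_zero _)
    | succ m ih =>
      intro hm1
      have hmJ : m < J := hm1
      obtain ⟨ih1, ih2⟩ := ih (Nat.le_of_lt hmJ)
      set Q := (((List.finRange J).take m).map lay).reverse.prod with hQdef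
      have hQ' : (((List.finRange J).take (m+1)).map lay).reverse.prod
          = lay ⟨m, hmJ⟩ * Q := by
        rw [List.take_succ]
        simp [List.getElem?_eq_getElem, List.length_finRange, List.getElem_finRange, hmJ, hQdef]
      rw [hQ']
      -- rows with L i ≠ m are unchanged
      have hunch : ∀ i k : Fin n, (L i : ℕ) ≠ m → (lay ⟨m, hmJ⟩ * Q) i k = Q i k := by
        intro i k h
        exact hrow_id _ _ _ _ (fun hc => h (by rw [hc]))
      have hAlQ : ∀ i k : Fin n, (L i : ℕ) ≤ m →
          ∑ x, Al i x * Q x k = ∑ x, Al i x * (lay ⟨m, hmJ⟩ * Q) x k := by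
        intro i k hi
        refine Finset.sum_congr rfl fun x _ => ?_
        by_cases hx : L x < L i
        · rw [hunch x k (by omega)]
        · rw [hAl]; simp [hx]
      constructor
      · intro i k hi
        rw [hunch i k (by omega), ih1 i k (by omega)]
      · intro i k hi
        by_cases him : (L i : ℕ) = m
        · -- the freshly processed row
          have hLi : L i = ⟨m, hmJ⟩ := Fin.ext him
          rw [hrow_a _ _ _ _ hLi]
          have : ∀ x, A i x * Q x k = Al i x * Q x k + Au i x * Q x k := by
            intro x; rw [hA]; ring
          rw [Finset.sum_congr rfl fun x _ => this x, Finset.sum_add_distrib]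
          have hAuterm : ∑ x, Au i x * Q x k = Au i k := by
            have : ∀ x, Au i x * Q x k = (if x = k then Au i x else 0) := by
              intro x
              by_cases hx : L i < L x
              · rw [ih1 x k (by omega)]
                split <;> simp
              · rw [hAu]; simp [hx]
            simp [this]
          rw [hAuterm, hAlQ i k (by omega)]
        · -- already processed rows unchanged
          rw [hunch i k him, ih2 i k (by omega), hAlQ i k (by omega)]
  -- conclude
  have hfull : (((List.finRange J).take J).map lay).reverse.prod = Atil := by
    rw [hAtil, List.take_of_length_le (le_of_eq (List.length_finRange : (List.finRange J).length = J))]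
  have hGS : ∀ i k : Fin n, Atil i k = ∑ x, Al i x * Atil x k + Au i k := by
    intro i k
    have := ((key J le_rfl).2 i k (L i).isLt
    )
    rw [hfull] at this
    exact this
  have h1 : (1 - Al) * Atil = Au := by
    ext i k
    rw [Matrix.sub_mul, Matrix.one_mul, Matrix.sub_apply, Matrix.mul_apply, hGS i k]
    ring
  refine ⟨h1, ?_⟩
  have hdet : IsUnit (1 - Al).det := (Matrix.isUnit_iff_isUnit_det _).mp hinv
  rw [← h1, ← Matrix.mul_assoc, Matrix.nonsing_inv_mul _ hdet, Matrix.one_mul]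
end
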